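/- Let f : ℝ → ℝ and let (δ_n) be a sequence with |δ_n| → ∞ such that P_f(δ_n) ≠ ∅ for all n, and let r_min be a proximal selection. Then |r_min(δ_n)| → ∞. -/
import Mathlib


/-- If `|δ_n| → ∞` and `r_min(δ_n) ∈ P_f(δ_n)` for all `n`, then
`|r_min(δ_n)| → ∞`. -/
theorem prox_selection_coercive (f : ℝ → ℝ) (δ : ℕ → ℝ) (rmin : ℝ → ℝ)
    (hδ : Filter.Tendsto (fun n => |δ n|) Filter.atTop Filter.atTop)
    (hsel : ∀ n : ℕ, ∀ r' : ℝ,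
      (δ n - rmin (δ n)) ^ 2 / 2 + f (rmin (δ n)) ≤ (δ n - r') ^ 2 / 2 + f r') :
    Filter.Tendsto (fun n => |rmin (δ n)|) Filter.atTop Filter.atTop := by
  rw [Filter.tendsto_atTop]
  intro b
  by_contra hb
  rw [Filter.not_eventually] at hb
  set M : ℝ := max b 0 with hMdef
  have hM0 : (0:ℝ) ≤ M := le_max_right _ _
  have hbM : b ≤ M := le_max_left _ _
  set d0 : ℝ := δ 0 with hd0def
  set r0 : ℝ := rmin (δ 0) with hr0def
  set K : ℝ := (d0 - r0) ^ 2 / 2 + f r0 - (|d0| + M) ^ 2 / 2 with hKdef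
  set X : ℝ := max (M + 2) (max (f (M + 1)) (f (-(M + 1))) - K + M + 1) with hXdef
  have hX1 : M + 2 ≤ X := le_max_left _ _
  have hX2 : f (M + 1) - K + M + 1 ≤ X :=
    le_trans (by have := le_max_left (f (M + 1)) (f (-(M + 1))); linarith)
      (le_max_right _ _)
  have hX3 : f (-(M + 1)) - K + M + 1 ≤ X :=
    le_trans (by have := le_max_right (f (M + 1)) (f (-(M + 1))); linarith)
      (le_max_right _ _)
  have hev : ∀ᶠ n in Filter.atTop, X ≤ |δ n| := hδ.eventually_ge_atTop X
  obtain ⟨n, hn1, hn2⟩ := (hb.and_eventually hev).exists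
  push_neg at hn1
  set r : ℝ := rmin (δ n) with hrdef
  set d : ℝ := δ n with hddef
  have habs : |r| < M := lt_of_lt_of_le hn1 hbM
  have hr1 : r < M := lt_of_abs_lt habs
  have hr2 : -M < r := neg_lt_of_abs_lt habs
  -- lower bound on f r from optimality at index 0
  have h0 := hsel 0 r
  have hd0r : (d0 - r) ^ 2 ≤ (|d0| + M) ^ 2 := by
    nlinarith [le_abs_self d0, neg_abs_le d0, abs_nonneg d0]
  have hfr : K ≤ f r := by
    rw [hKdef]
    simp only [← hd0def, ← hr0def] at h0
    linarith
  rcases le_total 0 d with hd | hd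
  · have hdX : X ≤ d := by rwa [abs_of_nonneg hd] at hn2
    have h1 := hsel n (M + 1)
    simp only [← hrdef, ← hddef] at h1
    nlinarith [mul_nonneg (by linarith : (0:ℝ) ≤ M - r)
      (by linarith : (0:ℝ) ≤ 2 * d - r - M - 1)]
  · have hdX : d ≤ -X := by
      rw [abs_of_nonpos hd] at hn2; linarith
    have h1 := hsel n (-(M + 1))
    simp only [← hrdef, ← hddef] at h1
    nlinarith [mul_nonneg (by linarith : (0:ℝ) ≤ r + M)
      (by linarith : (0:ℝ) ≤ -(2 * d - r + M + 1))]
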